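/- Let U, V, W be nonempty compact subsets of ℂ and p ∈ [1,∞]. Then M_fin,p = lim_{n→∞} M_{n,p} = M_p; that is, the supremum of ‖F‖_p over all finite tridiagonal matrices F ∈ M_fin(U,V,W) equals the supremum M_p of ‖B‖_p over all bi-infinite B ∈ M(U,V,W), and the suprema M_{n,p} over n×n tridiagonal matrices converge to M_p as n → ∞. -/

import Mathlib

open scoped ENNReal

noncomputable section

/-- The sequence space `ℓᵖ(ℤ)` (complex valued). -/
abbrev SeqZ (p : ℝ≥0∞) : Type := lp (fun _ : ℤ => ℂ) p
/-- The sequence space `ℓᵖ(ℕ)` (complex valued). -/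
abbrev SeqN (p : ℝ≥0∞) : Type := lp (fun _ : ℕ => ℂ) p

/-- The three diagonals take values in `U`, `V`, `W` respectively. -/
def RangesIn (U V W : Set ℂ) {ι : Type*} (u v w : ι → ℂ) : Prop :=
  (∀ i, u i ∈ U) ∧ (∀ i, v i ∈ V) ∧ (∀ i, w i ∈ W)

/-- `A` acts on `ℓᵖ(ℤ)` as the bi-infinite tridiagonal matrix with subdiagonal `u`
(entries `a_{i,i-1} = u i`), main diagonal `v` and superdiagonal `w` (`a_{i,i+1} = w i`). -/
def BiActs {p : ℝ≥0∞} [Fact (1 ≤ p)] (A : SeqZ p →L[ℂ] SeqZ p) (u v w : ℤ → ℂ) : Prop :=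
  ∀ (x : SeqZ p) (i : ℤ),
    (A x : ∀ _ : ℤ, ℂ) i =
      u i * (x : ∀ _ : ℤ, ℂ) (i - 1) + v i * (x : ∀ _ : ℤ, ℂ) i +
        w i * (x : ∀ _ : ℤ, ℂ) (i + 1)

/-- `A` acts on `ℓᵖ(ℕ)` as the semi-infinite tridiagonal matrix with subdiagonal `u`
(entries `a_{i,i-1} = u i` for `i ≥ 1`), main diagonal `v` and superdiagonal `w`. -/
def SemiActs {p : ℝ≥0∞} [Fact (1 ≤ p)] (A : SeqN p →L[ℂ] SeqN p) (u v w : ℕ → ℂ) : Prop :=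
  ∀ (x : SeqN p) (i : ℕ),
    (A x : ∀ _ : ℕ, ℂ) i =
      (if i = 0 then 0 else u i * (x : ∀ _ : ℕ, ℂ) (i - 1)) + v i * (x : ∀ _ : ℕ, ℂ) i +
        w i * (x : ∀ _ : ℕ, ℂ) (i + 1)

/-- membership in `M(U,V,W)`: bi-infinite tridiagonal operators over `(U,V,W)`. -/
def MemM (U V W : Set ℂ) {p : ℝ≥0∞} [Fact (1 ≤ p)] (A : SeqZ p →L[ℂ] SeqZ p) : Prop :=
  ∃ u v w : ℤ → ℂ, RangesIn U V W u v w ∧ BiActs A u v w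

/-- membership in `M₊(U,V,W)`: semi-infinite tridiagonal operators over `(U,V,W)`. -/
def MemMPlus (U V W : Set ℂ) {p : ℝ≥0∞} [Fact (1 ≤ p)] (A : SeqN p →L[ℂ] SeqN p) : Prop :=
  ∃ u v w : ℕ → ℂ, RangesIn U V W u v w ∧ SemiActs A u v w

/-- pseudoergodicity of bi-infinite diagonal data: every finite pattern of diagonals over
`(U,V,W)` is reproduced to arbitrary accuracy somewhere along the diagonals. -/
def PseudoergodicZ (U V W : Set ℂ) (u v w : ℤ → ℂ) : Prop :=
  ∀ (n : ℕ) (bu bv bw : Fin n → ℂ), RangesIn U V W bu bv bw →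
    ∀ ε : ℝ, 0 < ε → ∃ k : ℤ, ∀ i : Fin n,
      ‖u (k + (i : ℕ)) - bu i‖ < ε ∧ ‖v (k + (i : ℕ)) - bv i‖ < ε ∧
        ‖w (k + (i : ℕ)) - bw i‖ < ε

/-- pseudoergodicity of semi-infinite diagonal data. -/
def PseudoergodicN (U V W : Set ℂ) (u v w : ℕ → ℂ) : Prop :=
  ∀ (n : ℕ) (bu bv bw : Fin n → ℂ), RangesIn U V W bu bv bw →
    ∀ ε : ℝ, 0 < ε → ∃ k : ℕ, ∀ i : Fin n,
      ‖u (k + (i : ℕ)) - bu i‖ < ε ∧ ‖v (k + (i : ℕ)) - bv i‖ < ε ∧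
        ‖w (k + (i : ℕ)) - bw i‖ < ε

/-- membership in `PE(U,V,W)`: pseudoergodic bi-infinite operators. -/
def MemPE (U V W : Set ℂ) {p : ℝ≥0∞} [Fact (1 ≤ p)] (A : SeqZ p →L[ℂ] SeqZ p) : Prop :=
  ∃ u v w : ℤ → ℂ, RangesIn U V W u v w ∧ PseudoergodicZ U V W u v w ∧ BiActs A u v w

/-- membership in `PE₊(U,V,W)`: pseudoergodic semi-infinite operators. -/
def MemPEPlus (U V W : Set ℂ) {p : ℝ≥0∞} [Fact (1 ≤ p)] (A : SeqN p →L[ℂ] SeqN p) : Prop :=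
  ∃ u v w : ℕ → ℂ, RangesIn U V W u v w ∧ PseudoergodicN U V W u v w ∧ SemiActs A u v w

/-- `(U,V,W)` is compatible: every operator in `M(U,V,W)` is invertible on `ℓᵖ(ℤ)`
for every `p ∈ [1,∞]`. -/
def Compatible (U V W : Set ℂ) : Prop :=
  ∀ (p : ℝ≥0∞) [Fact (1 ≤ p)], ∀ A : SeqZ p →L[ℂ] SeqZ p, MemM U V W A → IsUnit A

/-- `α(A)`: the dimension of the kernel. -/
def alphaDim {E : Type*} [NormedAddCommGroup E] [NormedSpace ℂ E] (A : E →L[ℂ] E) : ℕ :=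
  Module.finrank ℂ (LinearMap.ker (A : E →ₗ[ℂ] E))

/-- `β(A)`: the codimension of the range. -/
def betaDim {E : Type*} [NormedAddCommGroup E] [NormedSpace ℂ E] (A : E →L[ℂ] E) : ℕ :=
  Module.finrank ℂ (E ⧸ LinearMap.range (A : E →ₗ[ℂ] E))

/-- `A` is a Fredholm operator: finite-dimensional kernel and finite-codimensional range. -/
def IsFredholmOp {E : Type*} [NormedAddCommGroup E] [NormedSpace ℂ E] (A : E →L[ℂ] E) : Prop :=
  FiniteDimensional ℂ (LinearMap.ker (A : E →ₗ[ℂ] E)) ∧ FiniteDimensional ℂ (E ⧸ LinearMap.range (A : E →ₗ[ℂ] E))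

/-- the Fredholm index `ind A = α(A) - β(A)`. -/
def fredIndex {E : Type*} [NormedAddCommGroup E] [NormedSpace ℂ E] (A : E →L[ℂ] E) : ℤ :=
  (alphaDim A : ℤ) - (betaDim A : ℤ)

/-- `(U,V,W)` is compatible and the common Fredholm index `κ(U,V,W)` of the semi-infinite
operators in `M₊(U,V,W)` equals `k`. -/
def KappaIs (U V W : Set ℂ) (k : ℤ) : Prop :=
  Compatible U V W ∧
    ∀ (p : ℝ≥0∞) [Fact (1 ≤ p)], ∀ B : SeqN p →L[ℂ] SeqN p, MemMPlus U V W B →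
      IsFredholmOp B ∧ fredIndex B = k

/-- union of the `ℓᵖ`-spectra of all operators in `M(U,V,W)`, at exponent `p`. -/
def specSetZAt (U V W : Set ℂ) (p : ℝ≥0∞) [Fact (1 ≤ p)] : Set ℂ :=
  {lam | ∃ C : SeqZ p →L[ℂ] SeqZ p, MemM U V W C ∧ lam ∈ spectrum ℂ C}

/-- union of the `ℓᵖ`-spectra of all operators in `M₊(U,V,W)`, at exponent `p`. -/
def specSetNAt (U V W : Set ℂ) (p : ℝ≥0∞) [Fact (1 ≤ p)] : Set ℂ :=
  {lam | ∃ C : SeqN p →L[ℂ] SeqN p, MemMPlus U V W C ∧ lam ∈ spectrum ℂ C}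

/-- `Σ(U,V,W)`: the union of the spectra of all operators in `M(U,V,W)`. -/
def SigmaSet (U V W : Set ℂ) : Set ℂ :=
  ⋃ (p : ℝ≥0∞), ⋃ (h : Fact (1 ≤ p)), @specSetZAt U V W p h

/-- `Σ₊(U,V,W)`: the union of the spectra of all operators in `M₊(U,V,W)`. -/
def SigmaPlusSet (U V W : Set ℂ) : Set ℂ :=
  ⋃ (p : ℝ≥0∞), ⋃ (h : Fact (1 ≤ p)), @specSetNAt U V W p h

/-- `V - λ`. -/
def shiftSet (V : Set ℂ) (lam : ℂ) : Set ℂ := (fun v => v - lam) '' V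

/-- `Σ_k(U,V,W) = {λ : (U, V-λ, W) compatible with κ(U, V-λ, W) = k}`. -/
def SigmaK (U V W : Set ℂ) (k : ℤ) : Set ℂ := {lam | KappaIs U (shiftSet V lam) W k}

/-- `Σ_{±1} = Σ_{-1} ∪ Σ_1`. -/
def SigmaPM (U V W : Set ℂ) : Set ℂ := SigmaK U V W (-1) ∪ SigmaK U V W 1

/-- the ellipse `E(u,v,w) = {u t + v + w/t : |t| = 1}`. -/
def ellipse (u v w : ℂ) : Set ℂ := (fun t : ℂ => u * t + v + w / t) '' {t : ℂ | ‖t‖ = 1}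

open Polynomial in
open Classical in
/-- winding number of the loop `t ↦ u t + v + w/t` (`t` on the unit circle, traversed
counter-clockwise) around `lam`, computed, via the argument principle, as the number of
roots (with multiplicity) of `u t² + (v - λ) t + w` in the open unit disk minus the order
of the pole at `0`.  (Valid whenever `lam` does not lie on the ellipse itself.) -/
def windingAt (u v w lam : ℂ) : ℤ :=
  (((C u * X ^ 2 + C (v - lam) * X + C w).roots.filter (fun z => ‖z‖ < 1)).card : ℤ) - 1

/-- `lam` lies inside the oriented ellipse `E(u,v,w)`: not on it, nonzero winding number. -/
def insideEllipse (u v w lam : ℂ) : Prop :=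
  lam ∉ ellipse u v w ∧ windingAt u v w lam ≠ 0

/-- `E_∩`: points inside all the ellipses `E(u,v,w)`, `(u,v,w) ∈ U × V × W`. -/
def Ecap (U V W : Set ℂ) : Set ℂ :=
  {lam | ∀ u ∈ U, ∀ v ∈ V, ∀ w ∈ W, insideEllipse u v w lam}

/-- `E₁`: points of `E_∩` circumnavigated clockwise (winding number `-1`) by all ellipses. -/
def Eone (U V W : Set ℂ) : Set ℂ :=
  {lam ∈ Ecap U V W | ∀ u ∈ U, ∀ v ∈ V, ∀ w ∈ W, windingAt u v w lam = -1}

/-- `E_{-1}`: points of `E_∩` circumnavigated counter-clockwise (winding number `1`). -/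
def EmOne (U V W : Set ℂ) : Set ℂ :=
  {lam ∈ Ecap U V W | ∀ u ∈ U, ∀ v ∈ V, ∀ w ∈ W, windingAt u v w lam = 1}

/-- `E_{±1} = E_{-1} ∪ E₁`. -/
def Epm (U V W : Set ℂ) : Set ℂ := EmOne U V W ∪ Eone U V W

/-- `E_∪`: the union of the filled ellipses. -/
def Ecup (U V W : Set ℂ) : Set ℂ :=
  ⋃ (u ∈ U) (v ∈ V) (w ∈ W), convexHull ℝ (ellipse u v w)

/-- `sup` of moduli over a set, e.g. `u^* = max_{u ∈ U} |u|`. -/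
def supAbs (S : Set ℂ) : ℝ := sSup ((fun z : ℂ => ‖z‖) '' S)

/-- `inf` of moduli over a set, e.g. `u_* = min_{u ∈ U} |u|`. -/
def infAbs (S : Set ℂ) : ℝ := sInf ((fun z : ℂ => ‖z‖) '' S)

/-- `M_p = sup_{B ∈ M(U,V,W)} ‖B‖_p`. -/
def Mnorm (U V W : Set ℂ) (p : ℝ≥0∞) [Fact (1 ≤ p)] : ℝ :=
  sSup {x : ℝ | ∃ B : SeqZ p →L[ℂ] SeqZ p, MemM U V W B ∧ x = ‖B‖}

/-- `N_p = sup_{B ∈ M(U,V,W)} ‖B⁻¹‖_p`. -/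
def Nnorm (U V W : Set ℂ) (p : ℝ≥0∞) [Fact (1 ≤ p)] : ℝ :=
  sSup {x : ℝ | ∃ B : SeqZ p →L[ℂ] SeqZ p, MemM U V W B ∧ x = ‖Ring.inverse B‖}

/-- `M_{+,p} = sup_{B₊ ∈ M₊(U,V,W)} ‖B₊‖_p`. -/
def MnormPlus (U V W : Set ℂ) (p : ℝ≥0∞) [Fact (1 ≤ p)] : ℝ :=
  sSup {x : ℝ | ∃ B : SeqN p →L[ℂ] SeqN p, MemMPlus U V W B ∧ x = ‖B‖}

/-- `N_{+,p} = sup_{B₊ ∈ M₊(U,V,W)} ‖B₊⁻¹‖_p`. -/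
def NnormPlus (U V W : Set ℂ) (p : ℝ≥0∞) [Fact (1 ≤ p)] : ℝ :=
  sSup {x : ℝ | ∃ B : SeqN p →L[ℂ] SeqN p, MemMPlus U V W B ∧ x = ‖Ring.inverse B‖}

/-- `p` is favourable for `(U,V,W)`: `‖A₊⁻¹‖_p = N_{+,p} = N_p` for all `A₊ ∈ PE₊(U,V,W)`. -/
def Favourable (U V W : Set ℂ) (p : ℝ≥0∞) [Fact (1 ≤ p)] : Prop :=
  ∀ A : SeqN p →L[ℂ] SeqN p, MemPEPlus U V W A →
    ‖Ring.inverse A‖ = NnormPlus U V W p ∧ NnormPlus U V W p = Nnorm U V W p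

/-- the `n × n` tridiagonal matrix with diagonals `u` (sub), `v` (main), `w` (super). -/
def JacobiMatrix {n : ℕ} (u v w : Fin n → ℂ) : Matrix (Fin n) (Fin n) ℂ :=
  fun i j =>
    if ((i : ℕ) : ℤ) = ((j : ℕ) : ℤ) + 1 then u i
    else if i = j then v i
    else if ((j : ℕ) : ℤ) = ((i : ℕ) : ℤ) + 1 then w i
    else 0

/-- the `ℓᵖ` norm of a finite complex vector. -/
def pVecNorm (p : ℝ≥0∞) [Fact (1 ≤ p)] {n : ℕ} (x : Fin n → ℂ) : ℝ :=
  ‖(WithLp.equiv p (Fin n → ℂ)).symm x‖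

/-- the operator norm of an `n × n` matrix acting on `(ℂⁿ, ‖·‖_p)`. -/
def matOpNorm (p : ℝ≥0∞) [Fact (1 ≤ p)] {n : ℕ} (F : Matrix (Fin n) (Fin n) ℂ) : ℝ :=
  sInf {c : ℝ | 0 ≤ c ∧ ∀ x : Fin n → ℂ, pVecNorm p (F.mulVec x) ≤ c * pVecNorm p x}

/-- the `p`-operator norm of the inverse matrix. -/
def matInvNorm (p : ℝ≥0∞) [Fact (1 ≤ p)] {n : ℕ} (F : Matrix (Fin n) (Fin n) ℂ) : ℝ :=
  matOpNorm p F⁻¹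

/-- `M_{n,p}`: sup of the `p`-norms of the `n × n` tridiagonal matrices over `(U,V,W)`. -/
def MnormFinN (U V W : Set ℂ) (p : ℝ≥0∞) [Fact (1 ≤ p)] (n : ℕ) : ℝ :=
  sSup {x : ℝ | ∃ u v w : Fin n → ℂ, RangesIn U V W u v w ∧
    x = matOpNorm p (JacobiMatrix u v w)}

/-- `M_{fin,p}`: sup of the `p`-norms of all finite tridiagonal matrices over `(U,V,W)`. -/
def MnormFin (U V W : Set ℂ) (p : ℝ≥0∞) [Fact (1 ≤ p)] : ℝ :=
  sSup {x : ℝ | ∃ (n : ℕ) (u v w : Fin n → ℂ), RangesIn U V W u v w ∧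
    x = matOpNorm p (JacobiMatrix u v w)}

/-- `N_{fin,p}`: sup of the `p`-norms of the inverses of all finite tridiagonal matrices. -/
def NnormFin (U V W : Set ℂ) (p : ℝ≥0∞) [Fact (1 ≤ p)] : ℝ :=
  sSup {x : ℝ | ∃ (n : ℕ) (u v w : Fin n → ℂ), RangesIn U V W u v w ∧
    x = matInvNorm p (JacobiMatrix u v w)}

/-- entry `(i,j)` of the bi-infinite tridiagonal matrix with diagonals `u`, `v`, `w`. -/
def secEntryZ (u v w : ℤ → ℂ) (i j : ℤ) : ℂ :=
  if i = j + 1 then u i else if i = j then v i else if j = i + 1 then w i else 0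

/-- the finite section `(a_{ij})_{i,j=l}^{r}` of the bi-infinite tridiagonal matrix. -/
def finSecZ (u v w : ℤ → ℂ) (l r : ℤ) :
    Matrix (Fin (r + 1 - l).toNat) (Fin (r + 1 - l).toNat) ℂ :=
  fun i j => secEntryZ u v w (l + (i : ℕ)) (l + (j : ℕ))

/-- entry `(i,j)` of the semi-infinite tridiagonal matrix with diagonals `u`, `v`, `w`. -/
def secEntryN (u v w : ℕ → ℂ) (i j : ℕ) : ℂ :=
  if i = j + 1 then u i else if i = j then v i else if j = i + 1 then w i else 0

/-- the `n`-th finite section (first `n` rows and columns) of the semi-infinite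
tridiagonal matrix with diagonals `u`, `v`, `w`. -/
def finSecN (u v w : ℕ → ℂ) (n : ℕ) : Matrix (Fin n) (Fin n) ℂ :=
  fun i j => secEntryN u v w i j

/-- stability of the sequence of finite sections of a bi-infinite tridiagonal matrix with
cut-off sequences `l`, `r`: eventually invertible with uniformly bounded inverses. -/
def StableSecsZ (p : ℝ≥0∞) [Fact (1 ≤ p)] (u v w : ℤ → ℂ) (l r : ℕ → ℤ) : Prop :=
  ∃ (n₀ : ℕ) (c : ℝ), ∀ n, n₀ ≤ n →
    IsUnit (finSecZ u v w (l n) (r n)) ∧ matInvNorm p (finSecZ u v w (l n) (r n)) ≤ c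

/-- stability of the sequence of finite sections of a semi-infinite tridiagonal matrix. -/
def StableSecsN (p : ℝ≥0∞) [Fact (1 ≤ p)] (u v w : ℕ → ℂ) (r : ℕ → ℕ) : Prop :=
  ∃ (n₀ : ℕ) (c : ℝ), ∀ n, n₀ ≤ n →
    IsUnit (finSecN u v w (r n)) ∧ matInvNorm p (finSecN u v w (r n)) ≤ c

/-- the full finite section method applies to every operator in `M(U,V,W)`:
the operator is invertible and the finite sections `(a_{ij})_{i,j=-n}^{n}` are stable. -/
def FullFSMAppliesZ (U V W : Set ℂ) : Prop :=
  ∀ (p : ℝ≥0∞) [Fact (1 ≤ p)], ∀ u v w : ℤ → ℂ, RangesIn U V W u v w →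
    ∀ A : SeqZ p →L[ℂ] SeqZ p, BiActs A u v w →
      IsUnit A ∧ StableSecsZ p u v w (fun n => -(n : ℤ)) (fun n => (n : ℤ))

/-- the full finite section method applies to every operator in `M₊(U,V,W)`:
the operator is invertible and the finite sections `(a_{ij})_{i,j=1}^{n}` are stable. -/
def FullFSMAppliesN (U V W : Set ℂ) : Prop :=
  ∀ (p : ℝ≥0∞) [Fact (1 ≤ p)], ∀ u v w : ℕ → ℂ, RangesIn U V W u v w →
    ∀ A : SeqN p →L[ℂ] SeqN p, SemiActs A u v w →
      IsUnit A ∧ StableSecsN p u v w (fun n => n)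

/-- one operator in `PE₊(U,V,W)` is invertible (on some, equivalently each, `ℓᵖ(ℕ)`). -/
def PEPlusInvAt (U V W : Set ℂ) (p : ℝ≥0∞) [Fact (1 ≤ p)] : Prop :=
  ∃ B : SeqN p →L[ℂ] SeqN p, MemPEPlus U V W B ∧ IsUnit B

def ExistsInvPEPlus (U V W : Set ℂ) : Prop :=
  ∃ (p : ℝ≥0∞) (h : Fact (1 ≤ p)), @PEPlusInvAt U V W p h

/-- one operator in `PE₊(U,V,W)` is Fredholm of index `0`. -/
def PEPlusFred0At (U V W : Set ℂ) (p : ℝ≥0∞) [Fact (1 ≤ p)] : Prop :=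
  ∃ B : SeqN p →L[ℂ] SeqN p, MemPEPlus U V W B ∧ IsFredholmOp B ∧ fredIndex B = 0

def ExistsFred0PEPlus (U V W : Set ℂ) : Prop :=
  ∃ (p : ℝ≥0∞) (h : Fact (1 ≤ p)), @PEPlusFred0At U V W p h

/-- all operators in `M₊(U,V,W)` are invertible (on every `ℓᵖ(ℕ)`). -/
def AllMPlusInv (U V W : Set ℂ) : Prop :=
  ∀ (p : ℝ≥0∞) [Fact (1 ≤ p)], ∀ B : SeqN p →L[ℂ] SeqN p, MemMPlus U V W B → IsUnit B

/-- the `ε`-pseudospectrum of a bounded operator (the spectrum together with the points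
where the resolvent has norm `> 1/ε`). -/
def pspec {E : Type*} [NormedAddCommGroup E] [NormedSpace ℂ E] (ε : ℝ)
    (A : E →L[ℂ] E) : Set ℂ :=
  {lam | ¬IsUnit (A - lam • (1 : E →L[ℂ] E)) ∨
    1 / ε < ‖Ring.inverse (A - lam • (1 : E →L[ℂ] E))‖}

/-- the `ε`-pseudospectrum of an `n × n` matrix, in the `p`-operator norm. -/
def pspecMat (p : ℝ≥0∞) [Fact (1 ≤ p)] {n : ℕ} (ε : ℝ) (F : Matrix (Fin n) (Fin n) ℂ) :
    Set ℂ :=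
  {lam | ¬IsUnit (F - lam • (1 : Matrix (Fin n) (Fin n) ℂ)) ∨
    1 / ε < matInvNorm p (F - lam • (1 : Matrix (Fin n) (Fin n) ℂ))}

/-- `Σ_ε^p`: union of the `ε`-pseudospectra of all operators in `M(U,V,W)`. -/
def SigmaEps (U V W : Set ℂ) (p : ℝ≥0∞) [Fact (1 ≤ p)] (ε : ℝ) : Set ℂ :=
  {lam | ∃ B : SeqZ p →L[ℂ] SeqZ p, MemM U V W B ∧ lam ∈ pspec ε B}

/-- `Σ_{+,ε}^p`: union of the `ε`-pseudospectra of all operators in `M₊(U,V,W)`. -/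
def SigmaPlusEps (U V W : Set ℂ) (p : ℝ≥0∞) [Fact (1 ≤ p)] (ε : ℝ) : Set ℂ :=
  {lam | ∃ B : SeqN p →L[ℂ] SeqN p, MemMPlus U V W B ∧ lam ∈ pspec ε B}

/-- `p` is favourable for all the (compatible, index zero) shifted triples `(U, V-λ, W)`. -/
def FavAll (U V W : Set ℂ) (p : ℝ≥0∞) [Fact (1 ≤ p)] : Prop :=
  ∀ lam : ℂ, KappaIs U (shiftSet V lam) W 0 → Favourable U (shiftSet V lam) W p

end
section St14Aux

open scoped ENNReal

variable {p : ℝ≥0∞} [Fact (1 ≤ p)]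

noncomputable instance st14FD {n : ℕ} : FiniteDimensional ℂ (WithLp p (Fin n → ℂ)) :=
  Module.Finite.equiv (WithLp.linearEquiv p ℂ (Fin n → ℂ)).symm

noncomputable def st14CLM (p : ℝ≥0∞) [Fact (1 ≤ p)] {n : ℕ} (F : Matrix (Fin n) (Fin n) ℂ) :
    WithLp p (Fin n → ℂ) →L[ℂ] WithLp p (Fin n → ℂ) :=
  LinearMap.toContinuousLinearMap
    ((WithLp.linearEquiv p ℂ (Fin n → ℂ)).symm.toLinearMap ∘ₗ F.mulVecLin ∘ₗ
      (WithLp.linearEquiv p ℂ (Fin n → ℂ)).toLinearMap)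

lemma st14CLM_apply {n : ℕ} (F : Matrix (Fin n) (Fin n) ℂ) (x : WithLp p (Fin n → ℂ)) :
    st14CLM p F x = (WithLp.equiv p (Fin n → ℂ)).symm (F.mulVec ((WithLp.equiv p _) x)) := rfl

lemma st14_matOpNorm_eq {n : ℕ} (F : Matrix (Fin n) (Fin n) ℂ) :
    matOpNorm p F = ‖st14CLM p F‖ := by
  rw [ContinuousLinearMap.norm_def, matOpNorm]
  congr 1
  ext c
  simp only [Set.mem_setOf_eq]
  constructor
  · rintro ⟨h0, h⟩
    refine ⟨h0, fun x => ?_⟩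
    have := h ((WithLp.equiv p _) x)
    rw [pVecNorm, pVecNorm, Equiv.symm_apply_apply] at this
    rw [st14CLM_apply]
    exact this
  · rintro ⟨h0, h⟩
    refine ⟨h0, fun x => ?_⟩
    have := h ((WithLp.equiv p _).symm x)
    rw [st14CLM_apply, Equiv.apply_symm_apply] at this
    exact this

lemma st14_matOpNorm_nonneg {n : ℕ} (F : Matrix (Fin n) (Fin n) ℂ) : 0 ≤ matOpNorm p F := by
  rw [st14_matOpNorm_eq]; exact norm_nonneg _

lemma st14_matOpNorm_le {n : ℕ} {F : Matrix (Fin n) (Fin n) ℂ} {c : ℝ} (hc : 0 ≤ c)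
    (h : ∀ x : Fin n → ℂ, pVecNorm p (F.mulVec x) ≤ c * pVecNorm p x) : matOpNorm p F ≤ c := by
  rw [st14_matOpNorm_eq]
  exact ContinuousLinearMap.opNorm_le_bound _ hc fun x => h ((WithLp.equiv p _) x)

lemma st14_le_matOpNorm {n : ℕ} (F : Matrix (Fin n) (Fin n) ℂ) (x : Fin n → ℂ) :
    pVecNorm p (F.mulVec x) ≤ matOpNorm p F * pVecNorm p x := by
  rw [st14_matOpNorm_eq]
  exact ContinuousLinearMap.le_opNorm (st14CLM p F) ((WithLp.equiv p _).symm x)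

end St14Aux

section St14Aux2

open scoped ENNReal

variable {p : ℝ≥0∞} [Fact (1 ≤ p)]

lemma st14_p_ne_zero : p ≠ 0 := (zero_lt_one.trans_le (Fact.out : (1:ℝ≥0∞) ≤ p)).ne'

lemma st14_toReal_pos (hp : p ≠ ∞) : 0 < p.toReal :=
  ENNReal.toReal_pos st14_p_ne_zero hp

lemma st14_pVecNorm_nonneg {n : ℕ} (z : Fin n → ℂ) : 0 ≤ pVecNorm p z := norm_nonneg _

lemma st14_pVecNorm_eq_sum (hp : p ≠ ∞) {n : ℕ} (z : Fin n → ℂ) :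
    pVecNorm p z = (∑ j, ‖z j‖ ^ p.toReal) ^ (1 / p.toReal) := by
  rw [pVecNorm, PiLp.norm_eq_sum (st14_toReal_pos hp)]
  simp_rw [WithLp.equiv_symm_apply]

lemma st14_sum_eq_pow (hp : p ≠ ∞) {n : ℕ} (z : Fin n → ℂ) :
    ∑ j, ‖z j‖ ^ p.toReal = pVecNorm p z ^ p.toReal := by
  rw [st14_pVecNorm_eq_sum hp, one_div, Real.rpow_inv_rpow (by positivity)
    (st14_toReal_pos hp).ne']

lemma st14_coord_le (hp : p = ∞) {n : ℕ} (z : Fin n → ℂ) (j : Fin n) :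
    ‖z j‖ ≤ pVecNorm p z := by
  subst hp
  rw [pVecNorm, PiLp.norm_eq_ciSup]
  simp_rw [WithLp.equiv_symm_apply]
  exact le_ciSup (f := fun i => ‖z i‖) (Set.Finite.bddAbove (Set.finite_range _)) j

lemma st14_pVecNorm_infty_le (hp : p = ∞) {n : ℕ} {z : Fin n → ℂ} {C : ℝ} (hC : 0 ≤ C)
    (h : ∀ j, ‖z j‖ ≤ C) : pVecNorm p z ≤ C := by
  subst hp
  rw [pVecNorm, PiLp.norm_eq_ciSup]
  simp_rw [WithLp.equiv_symm_apply]
  cases isEmpty_or_nonempty (Fin n) with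
  | inl h' => simpa [Real.iSup_of_isEmpty] using hC
  | inr h' => exact ciSup_le h

lemma st14_restrict_le {n : ℕ} (σ : Fin n → ℤ) (hσ : Function.Injective σ)
    (f : lp (fun _ : ℤ => ℂ) p) :
    pVecNorm p (fun j => f (σ j)) ≤ ‖f‖ := by
  rcases eq_or_ne p ∞ with hp | hp
  · exact st14_pVecNorm_infty_le hp (norm_nonneg f)
      fun j => lp.norm_apply_le_norm st14_p_ne_zero f (σ j)
  · have hq := st14_toReal_pos hp
    rw [st14_pVecNorm_eq_sum hp]
    have h1 : ∑ j, ‖f (σ j)‖ ^ p.toReal ≤ ‖f‖ ^ p.toReal := by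
      have e1 : ∑ i ∈ Finset.univ.image σ, ‖f i‖ ^ p.toReal
          = ∑ j : Fin n, ‖f (σ j)‖ ^ p.toReal :=
        Finset.sum_image (f := fun i => ‖f i‖ ^ p.toReal) (fun a _ b _ h => hσ h)
      rw [← e1]
      exact lp.sum_rpow_le_norm_rpow hq f _
    calc (∑ j, ‖f (σ j)‖ ^ p.toReal) ^ (1 / p.toReal)
        ≤ (‖f‖ ^ p.toReal) ^ (1 / p.toReal) :=
          Real.rpow_le_rpow (by positivity) h1 (by positivity)
      _ = ‖f‖ := by rw [one_div, Real.rpow_rpow_inv (norm_nonneg _) hq.ne']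

lemma st14_restrict_le_fin {m n : ℕ} (σ : Fin m → Fin n) (hσ : Function.Injective σ)
    (z : Fin n → ℂ) : pVecNorm p (fun j => z (σ j)) ≤ pVecNorm p z := by
  rcases eq_or_ne p ∞ with hp | hp
  · exact st14_pVecNorm_infty_le hp (st14_pVecNorm_nonneg z)
      fun j => st14_coord_le hp z (σ j)
  · have hq := st14_toReal_pos hp
    rw [st14_pVecNorm_eq_sum hp, st14_pVecNorm_eq_sum hp]
    refine Real.rpow_le_rpow (by positivity) ?_ (by positivity)
    have e1 : ∑ i ∈ Finset.univ.image σ, ‖z i‖ ^ p.toReal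
        = ∑ j : Fin m, ‖z (σ j)‖ ^ p.toReal :=
      Finset.sum_image (f := fun i => ‖z i‖ ^ p.toReal) (fun a _ b _ h => hσ h)
    rw [← e1]
    exact Finset.sum_le_sum_of_subset_of_nonneg (Finset.subset_univ _)
      (fun i _ _ => by positivity)

lemma st14_pad_le_fin {m n : ℕ} (σ : Fin m → Fin n) (hσ : Function.Injective σ)
    (z : Fin n → ℂ) (hz : ∀ j, (∀ i, σ i ≠ j) → z j = 0) :
    pVecNorm p z ≤ pVecNorm p (fun j => z (σ j)) := by
  rcases eq_or_ne p ∞ with hp | hp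
  · refine st14_pVecNorm_infty_le hp (st14_pVecNorm_nonneg _) fun j => ?_
    by_cases hj : ∀ i, σ i ≠ j
    · rw [hz j hj]; simpa using st14_pVecNorm_nonneg (fun j => z (σ j))
    · push_neg at hj
      obtain ⟨i, hi⟩ := hj
      rw [← hi]
      exact st14_coord_le hp (fun j => z (σ j)) i
  · have hq := st14_toReal_pos hp
    rw [st14_pVecNorm_eq_sum hp, st14_pVecNorm_eq_sum hp]
    refine Real.rpow_le_rpow (by positivity) (le_of_eq ?_) (by positivity)
    calc ∑ j : Fin n, ‖z j‖ ^ p.toReal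
        = ∑ i ∈ Finset.univ.image σ, ‖z i‖ ^ p.toReal := by
          refine (Finset.sum_subset (Finset.subset_univ _) fun j _ hj => ?_).symm
          have : z j = 0 := hz j fun i hi => hj (Finset.mem_image.mpr ⟨i, Finset.mem_univ i, hi⟩)
          rw [this, norm_zero, Real.zero_rpow hq.ne']
      _ = ∑ j : Fin m, ‖z (σ j)‖ ^ p.toReal :=
          Finset.sum_image (f := fun i => ‖z i‖ ^ p.toReal) (fun a _ b _ h => hσ h)

end St14Aux2

section St14Aux3

open scoped ENNReal

variable {p : ℝ≥0∞} [Fact (1 ≤ p)]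

noncomputable def st14Ext {n : ℕ} (x : Fin n → ℂ) (k : ℤ) : ℂ :=
  if h : 0 ≤ k ∧ k < n then x ⟨k.toNat, by omega⟩ else 0

lemma st14Ext_coe {n : ℕ} (x : Fin n → ℂ) (j : Fin n) : st14Ext x ((j : ℕ) : ℤ) = x j := by
  have h : (0:ℤ) ≤ ((j:ℕ):ℤ) ∧ ((j:ℕ):ℤ) < n := ⟨Int.natCast_nonneg _, by exact_mod_cast j.isLt⟩
  rw [st14Ext, dif_pos h]
  congr 1

lemma st14Ext_zero {n : ℕ} {x : Fin n → ℂ} {k : ℤ} (h : ¬(0 ≤ k ∧ k < n)) : st14Ext x k = 0 :=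
  dif_neg h

lemma st14_sum_ite {n : ℕ} (t : ℤ) (c : ℂ) (x : Fin n → ℂ) :
    (∑ j : Fin n, if ((j:ℕ):ℤ) = t then c * x j else 0) = c * st14Ext x t := by
  by_cases h : 0 ≤ t ∧ t < n
  · set j0 : Fin n := ⟨t.toNat, by omega⟩ with hj0def
    have hj0 : ((j0:ℕ):ℤ) = t := by simp [hj0def]; omega
    have hcond : ∀ j : Fin n, (((j:ℕ):ℤ) = t) = (j = j0) := by
      intro j
      apply propext
      exact ⟨fun hj => Fin.ext (by omega), fun hj => hj ▸ hj0⟩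
    simp_rw [hcond]
    rw [Finset.sum_ite_eq' Finset.univ j0 (fun j => c * x j), if_pos (Finset.mem_univ _)]
    rw [st14Ext, dif_pos h]
  · have hcond : ∀ j : Fin n, ¬(((j:ℕ):ℤ) = t) := by
      intro j hj
      have := j.isLt
      exact h (by constructor <;> omega)
    rw [st14Ext_zero h, mul_zero]
    exact Finset.sum_eq_zero fun j _ => if_neg (hcond j)

lemma st14_jacobi_mulVec {n : ℕ} (u v w x : Fin n → ℂ) (i : Fin n) :
    (JacobiMatrix u v w).mulVec x i =
      u i * st14Ext x (((i:ℕ):ℤ) - 1) + v i * st14Ext x ((i:ℕ):ℤ) +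
        w i * st14Ext x (((i:ℕ):ℤ) + 1) := by
  have hsplit : ∀ j : Fin n, JacobiMatrix u v w i j * x j =
      (if ((j:ℕ):ℤ) = ((i:ℕ):ℤ) - 1 then u i * x j else 0) +
      (if ((j:ℕ):ℤ) = ((i:ℕ):ℤ) then v i * x j else 0) +
      (if ((j:ℕ):ℤ) = ((i:ℕ):ℤ) + 1 then w i * x j else 0) := by
    intro j
    rw [JacobiMatrix]
    by_cases h1 : ((i:ℕ):ℤ) = ((j:ℕ):ℤ) + 1
    · rw [if_pos h1, if_pos (by omega), if_neg (by omega), if_neg (by omega)]; ring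
    · rw [if_neg h1]
      by_cases h2 : i = j
      · have hji : ((j:ℕ):ℤ) = ((i:ℕ):ℤ) := by rw [h2]
        rw [if_pos h2, if_neg (by omega), if_pos hji, if_neg (by omega)]; ring
      · have hji : ¬ ((j:ℕ):ℤ) = ((i:ℕ):ℤ) := fun hc => h2 (Fin.ext (by omega)).symm
        by_cases h3 : ((j:ℕ):ℤ) = ((i:ℕ):ℤ) + 1
        · rw [if_neg h2, if_pos h3, if_neg (by omega), if_neg hji, if_pos h3]; ring
        · rw [if_neg h2, if_neg h3, if_neg (by omega), if_neg hji, if_neg h3]; ring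
  calc (JacobiMatrix u v w).mulVec x i = ∑ j, JacobiMatrix u v w i j * x j := rfl
    _ = ∑ j : Fin n,
        ((if ((j:ℕ):ℤ) = ((i:ℕ):ℤ) - 1 then u i * x j else 0) +
        (if ((j:ℕ):ℤ) = ((i:ℕ):ℤ) then v i * x j else 0) +
        (if ((j:ℕ):ℤ) = ((i:ℕ):ℤ) + 1 then w i * x j else 0)) :=
          Finset.sum_congr rfl fun j _ => hsplit j
    _ = _ := by
        rw [Finset.sum_add_distrib, Finset.sum_add_distrib, st14_sum_ite, st14_sum_ite,
          st14_sum_ite]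

lemma st14_ext_memℓp {n : ℕ} (x' : Fin n → ℂ) : Memℓp (fun k : ℤ => st14Ext x' k) p := by
  refine (memℓp_zero ?_).of_exponent_ge (by simp)
  refine (Set.finite_range (fun j : Fin n => ((j:ℕ):ℤ))).subset fun k hk => ?_
  by_cases h : 0 ≤ k ∧ k < n
  · exact ⟨⟨k.toNat, by omega⟩, by simp; omega⟩
  · exact absurd (st14Ext_zero h) hk

lemma st14_ext_norm_le {n : ℕ} (x' : Fin n → ℂ) (f : lp (fun _ : ℤ => ℂ) p)
    (hf : ∀ k, (f : ℤ → ℂ) k = st14Ext x' k) : ‖f‖ ≤ pVecNorm p x' := by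
  rcases eq_or_ne p ∞ with hp | hp
  · subst hp
    refine lp.norm_le_of_forall_le (st14_pVecNorm_nonneg x') fun k => ?_
    rw [hf k, st14Ext]
    split_ifs with h
    · exact st14_coord_le rfl x' _
    · simpa using st14_pVecNorm_nonneg x'
  · have hq := st14_toReal_pos hp
    refine lp.norm_le_of_tsum_le hq (st14_pVecNorm_nonneg x') ?_
    have hsupp : ∀ k ∉ Finset.image (fun j : Fin n => ((j:ℕ):ℤ)) Finset.univ,
        ‖(f:ℤ→ℂ) k‖ ^ p.toReal = 0 := by
      intro k hk
      have h0 : st14Ext x' k = 0 := by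
        apply st14Ext_zero
        intro h
        exact hk (Finset.mem_image.mpr ⟨⟨k.toNat, by omega⟩, Finset.mem_univ _, by simp; omega⟩)
      rw [hf k, h0, norm_zero, Real.zero_rpow hq.ne']
    rw [tsum_eq_sum hsupp,
      Finset.sum_image (f := fun k => ‖(f:ℤ→ℂ) k‖ ^ p.toReal)
        (fun a _ b _ h => Fin.ext (by omega)),
      ← st14_sum_eq_pow hp]
    refine le_of_eq (Finset.sum_congr rfl fun j _ => ?_)
    rw [hf, st14Ext_coe]

end St14Aux3

section St14Aux4

open scoped ENNReal

variable {p : ℝ≥0∞} [Fact (1 ≤ p)]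

lemma st14_comp_memℓp (e : ℤ ≃ ℤ) {f : ℤ → ℂ} (hf : Memℓp f p) :
    Memℓp (fun i => f (e i)) p := by
  rcases eq_or_ne p ∞ with hp | hp
  · subst hp
    apply memℓp_infty
    have hr : (Set.range fun i => ‖f (e i)‖) = Set.range fun i => ‖f i‖ :=
      e.surjective.range_comp fun i => ‖f i‖
    rw [memℓp_infty_iff] at hf
    rwa [hr]
  · exact memℓp_gen ((hf.summable (st14_toReal_pos hp)).comp_injective e.injective)

noncomputable def st14Comp (e : ℤ ≃ ℤ) (f : SeqZ p) : SeqZ p :=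
  ⟨fun i => f (e i), st14_comp_memℓp e (lp.memℓp f)⟩

lemma st14Comp_norm (e : ℤ ≃ ℤ) (f : SeqZ p) : ‖st14Comp e f‖ = ‖f‖ := by
  rcases eq_or_ne p ∞ with hp | hp
  · subst hp
    rw [lp.norm_eq_ciSup, lp.norm_eq_ciSup]
    show (⨆ i, ‖(f : ℤ → ℂ) (e i)‖) = ⨆ i, ‖(f : ℤ → ℂ) i‖
    rw [iSup, iSup]
    exact congrArg sSup (e.surjective.range_comp fun i => ‖(f : ℤ → ℂ) i‖)
  · have hq := st14_toReal_pos hp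
    rw [lp.norm_eq_tsum_rpow hq, lp.norm_eq_tsum_rpow hq]
    congr 1
    exact e.tsum_eq fun i => ‖(f : ℤ → ℂ) i‖ ^ p.toReal

lemma st14_mul_memℓp {b : ℤ → ℂ} {C : ℝ} (hb : ∀ i, ‖b i‖ ≤ C) {f : ℤ → ℂ}
    (hf : Memℓp f p) : Memℓp (fun i => b i * f i) p := by
  have hC : 0 ≤ C := le_trans (norm_nonneg (b 0)) (hb 0)
  rcases eq_or_ne p ∞ with hp | hp
  · subst hp
    apply memℓp_infty
    obtain ⟨M, hM⟩ := hf.bddAbove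
    refine ⟨C * M, ?_⟩
    rintro y ⟨i, rfl⟩
    calc ‖b i * f i‖ = ‖b i‖ * ‖f i‖ := norm_mul _ _
      _ ≤ C * M := mul_le_mul (hb i) (hM ⟨i, rfl⟩) (norm_nonneg _) hC
  · have hq := st14_toReal_pos hp
    apply memℓp_gen
    refine Summable.of_nonneg_of_le (fun i => by positivity)
      (fun i => ?_) (((hf.summable hq)).mul_left (C ^ p.toReal))
    calc ‖b i * f i‖ ^ p.toReal = (‖b i‖ * ‖f i‖) ^ p.toReal := by rw [norm_mul]
      _ = ‖b i‖ ^ p.toReal * ‖f i‖ ^ p.toReal :=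
          Real.mul_rpow (norm_nonneg _) (norm_nonneg _)
      _ ≤ C ^ p.toReal * ‖f i‖ ^ p.toReal :=
          mul_le_mul_of_nonneg_right
            (Real.rpow_le_rpow (norm_nonneg _) (hb i) hq.le) (by positivity)

lemma st14_mul_norm {b : ℤ → ℂ} {C : ℝ} (hb : ∀ i, ‖b i‖ ≤ C) (g : SeqZ p) :
    ‖(⟨fun i => b i * g i, st14_mul_memℓp hb (lp.memℓp g)⟩ : SeqZ p)‖ ≤ C * ‖g‖ := by
  have hC : 0 ≤ C := le_trans (norm_nonneg (b 0)) (hb 0)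
  rcases eq_or_ne p ∞ with hp | hp
  · subst hp
    refine lp.norm_le_of_forall_le (mul_nonneg hC (norm_nonneg g)) fun i => ?_
    show ‖b i * (g : ℤ → ℂ) i‖ ≤ C * ‖g‖
    calc ‖b i * (g : ℤ → ℂ) i‖ = ‖b i‖ * ‖(g : ℤ → ℂ) i‖ := norm_mul _ _
      _ ≤ C * ‖g‖ := mul_le_mul (hb i) (lp.norm_apply_le_norm st14_p_ne_zero g i)
          (norm_nonneg _) hC
  · have hq := st14_toReal_pos hp
    refine lp.norm_le_of_tsum_le hq (mul_nonneg hC (norm_nonneg g)) ?_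
    have h1 : ∀ i : ℤ, ‖b i * (g : ℤ → ℂ) i‖ ^ p.toReal ≤
        C ^ p.toReal * ‖(g : ℤ → ℂ) i‖ ^ p.toReal := fun i => by
      calc ‖b i * (g : ℤ → ℂ) i‖ ^ p.toReal
          = (‖b i‖ * ‖(g : ℤ → ℂ) i‖) ^ p.toReal := by rw [norm_mul]
        _ = ‖b i‖ ^ p.toReal * ‖(g : ℤ → ℂ) i‖ ^ p.toReal :=
            Real.mul_rpow (norm_nonneg _) (norm_nonneg _)
        _ ≤ _ := mul_le_mul_of_nonneg_right
            (Real.rpow_le_rpow (norm_nonneg _) (hb i) hq.le) (by positivity)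
    calc ∑' i, ‖b i * (g : ℤ → ℂ) i‖ ^ p.toReal
        ≤ ∑' i, C ^ p.toReal * ‖(g : ℤ → ℂ) i‖ ^ p.toReal :=
          Summable.tsum_le_tsum h1
            ((lp.memℓp (⟨fun i => b i * g i, st14_mul_memℓp hb (lp.memℓp g)⟩ :
              SeqZ p)).summable hq)
            (((lp.memℓp g).summable hq).mul_left _)
      _ = C ^ p.toReal * ∑' i, ‖(g : ℤ → ℂ) i‖ ^ p.toReal := tsum_mul_left
      _ = C ^ p.toReal * ‖g‖ ^ p.toReal := by rw [lp.norm_rpow_eq_tsum hq]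
      _ = (C * ‖g‖) ^ p.toReal := (Real.mul_rpow hC (norm_nonneg g)).symm

variable {u v w : ℤ → ℂ} {Cu Cv Cw : ℝ}

lemma st14_bi_memℓp (hu : ∀ i, ‖u i‖ ≤ Cu) (hv : ∀ i, ‖v i‖ ≤ Cv) (hw : ∀ i, ‖w i‖ ≤ Cw)
    (f : SeqZ p) :
    Memℓp (fun i => u i * (f : ℤ → ℂ) (i - 1) + v i * (f : ℤ → ℂ) i +
      w i * (f : ℤ → ℂ) (i + 1)) p :=
  ((st14_mul_memℓp hu (st14_comp_memℓp (Equiv.subRight (1:ℤ)) (lp.memℓp f))).add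
    (st14_mul_memℓp hv (lp.memℓp f))).add
      (st14_mul_memℓp hw (st14_comp_memℓp (Equiv.addRight (1:ℤ)) (lp.memℓp f)))

lemma st14_bi_norm_le (hu : ∀ i, ‖u i‖ ≤ Cu) (hv : ∀ i, ‖v i‖ ≤ Cv) (hw : ∀ i, ‖w i‖ ≤ Cw)
    (f : SeqZ p) :
    ‖(⟨fun i => u i * (f : ℤ → ℂ) (i - 1) + v i * (f : ℤ → ℂ) i +
        w i * (f : ℤ → ℂ) (i + 1), st14_bi_memℓp hu hv hw f⟩ : SeqZ p)‖ ≤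
      (Cu + Cv + Cw) * ‖f‖ := by
  set g1 : SeqZ p := st14Comp (Equiv.subRight (1:ℤ)) f with hg1
  set g2 : SeqZ p := st14Comp (Equiv.addRight (1:ℤ)) f with hg2
  set T1 : SeqZ p := ⟨fun i => u i * (g1 : ℤ → ℂ) i, st14_mul_memℓp hu (lp.memℓp g1)⟩ with hT1
  set T2 : SeqZ p := ⟨fun i => v i * (f : ℤ → ℂ) i, st14_mul_memℓp hv (lp.memℓp f)⟩ with hT2
  set T3 : SeqZ p := ⟨fun i => w i * (g2 : ℤ → ℂ) i, st14_mul_memℓp hw (lp.memℓp g2)⟩ with hT3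
  have he : (⟨fun i => u i * (f : ℤ → ℂ) (i - 1) + v i * (f : ℤ → ℂ) i +
      w i * (f : ℤ → ℂ) (i + 1), st14_bi_memℓp hu hv hw f⟩ : SeqZ p) = T1 + T2 + T3 := by
    apply lp.ext
    funext i
    rw [lp.coeFn_add, lp.coeFn_add]
    rfl
  rw [he]
  have h1 : ‖T1‖ ≤ Cu * ‖f‖ := by
    have := st14_mul_norm (p := p) hu g1
    rwa [st14Comp_norm] at this
  have h2 : ‖T2‖ ≤ Cv * ‖f‖ := st14_mul_norm hv f
  have h3 : ‖T3‖ ≤ Cw * ‖f‖ := by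
    have := st14_mul_norm (p := p) hw g2
    rwa [st14Comp_norm] at this
  calc ‖T1 + T2 + T3‖ ≤ ‖T1‖ + ‖T2‖ + ‖T3‖ := norm_add₃_le
    _ ≤ Cu * ‖f‖ + Cv * ‖f‖ + Cw * ‖f‖ := add_le_add (add_le_add h1 h2) h3
    _ = (Cu + Cv + Cw) * ‖f‖ := by ring

noncomputable def st14BiOp (u v w : ℤ → ℂ) {Cu Cv Cw : ℝ}
    (hu : ∀ i, ‖u i‖ ≤ Cu) (hv : ∀ i, ‖v i‖ ≤ Cv) (hw : ∀ i, ‖w i‖ ≤ Cw) :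
    SeqZ p →L[ℂ] SeqZ p :=
  LinearMap.mkContinuous
    { toFun := fun f => ⟨fun i => u i * (f : ℤ → ℂ) (i - 1) + v i * (f : ℤ → ℂ) i +
        w i * (f : ℤ → ℂ) (i + 1), st14_bi_memℓp hu hv hw f⟩
      map_add' := by
        intro f g
        apply lp.ext
        funext i
        simp only [lp.coeFn_add, Pi.add_apply]
        ring
      map_smul' := by
        intro c f
        apply lp.ext
        funext i
        simp only [lp.coeFn_smul, Pi.smul_apply, smul_eq_mul, RingHom.id_apply]
        ring }
    (Cu + Cv + Cw) (fun f => st14_bi_norm_le hu hv hw f)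

lemma st14BiOp_biActs (hu : ∀ i, ‖u i‖ ≤ Cu) (hv : ∀ i, ‖v i‖ ≤ Cv) (hw : ∀ i, ‖w i‖ ≤ Cw) :
    BiActs (st14BiOp (p := p) u v w hu hv hw) u v w := fun _ _ => rfl

lemma st14_biActs_norm_le {A : SeqZ p →L[ℂ] SeqZ p} (hA : BiActs A u v w)
    (hu : ∀ i, ‖u i‖ ≤ Cu) (hv : ∀ i, ‖v i‖ ≤ Cv) (hw : ∀ i, ‖w i‖ ≤ Cw) :
    ‖A‖ ≤ Cu + Cv + Cw := by
  have hCu : 0 ≤ Cu := le_trans (norm_nonneg (u 0)) (hu 0)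
  have hCv : 0 ≤ Cv := le_trans (norm_nonneg (v 0)) (hv 0)
  have hCw : 0 ≤ Cw := le_trans (norm_nonneg (w 0)) (hw 0)
  refine ContinuousLinearMap.opNorm_le_bound A (by positivity) fun f => ?_
  have he : A f = ⟨fun i => u i * (f : ℤ → ℂ) (i - 1) + v i * (f : ℤ → ℂ) i +
      w i * (f : ℤ → ℂ) (i + 1), st14_bi_memℓp hu hv hw f⟩ :=
    lp.ext (funext fun i => hA f i)
  rw [he]
  exact st14_bi_norm_le hu hv hw f

end St14Aux4

section St14Aux5

open scoped ENNReal

variable {p : ℝ≥0∞} [Fact (1 ≤ p)]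

lemma st14_cast_inj {n : ℕ} : Function.Injective (fun j : Fin n => ((j:ℕ):ℤ)) :=
  fun a b hab => Fin.ext (Int.natCast_inj.mp hab)

def st14Win (g : ℤ → ℂ) (l : ℤ) (m : ℕ) : Fin m → ℂ := fun j => g (l + ((j:ℕ):ℤ))

noncomputable def st14WinMat (u v w : ℤ → ℂ) (l : ℤ) (m : ℕ) : Matrix (Fin m) (Fin m) ℂ :=
  JacobiMatrix (st14Win u l m) (st14Win v l m) (st14Win w l m)

lemma st14_main1 {n : ℕ} (uf vf wf : Fin n → ℂ) (u v w : ℤ → ℂ)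
    (hext : ∀ j : Fin n, u ((j:ℕ):ℤ) = uf j ∧ v ((j:ℕ):ℤ) = vf j ∧ w ((j:ℕ):ℤ) = wf j)
    {A : SeqZ p →L[ℂ] SeqZ p} (hA : BiActs A u v w) :
    matOpNorm p (JacobiMatrix uf vf wf) ≤ ‖A‖ := by
  refine st14_matOpNorm_le (norm_nonneg A) fun x' => ?_
  set f : SeqZ p := ⟨fun k => st14Ext x' k, st14_ext_memℓp x'⟩ with hf
  have hfk : ∀ k, (f : ℤ → ℂ) k = st14Ext x' k := fun k => rfl
  have hrow : ∀ j : Fin n, (A f : ℤ → ℂ) ((j:ℕ):ℤ) = (JacobiMatrix uf vf wf).mulVec x' j := by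
    intro j
    rw [hA f ((j:ℕ):ℤ), st14_jacobi_mulVec]
    rw [hfk, hfk, hfk, (hext j).1, (hext j).2.1, (hext j).2.2]
  calc pVecNorm p ((JacobiMatrix uf vf wf).mulVec x')
      = pVecNorm p (fun j : Fin n => (A f : ℤ → ℂ) ((j:ℕ):ℤ)) := by
        congr 1
        funext j
        rw [hrow]
    _ ≤ ‖A f‖ := st14_restrict_le _ st14_cast_inj (A f)
    _ ≤ ‖A‖ * ‖f‖ := A.le_opNorm f
    _ ≤ ‖A‖ * pVecNorm p x' :=
        mul_le_mul_of_nonneg_left (st14_ext_norm_le x' f hfk) (norm_nonneg A)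

lemma st14_window_row (u v w : ℤ → ℂ) (x : SeqZ p) (l : ℤ) (m : ℕ) (j : Fin m)
    (h1 : 1 ≤ (j:ℕ)) (h2 : (j:ℕ) + 1 < m) {A : SeqZ p →L[ℂ] SeqZ p} (hA : BiActs A u v w) :
    (st14WinMat u v w l m).mulVec (st14Win (x : ℤ → ℂ) l m) j
      = (A x : ℤ → ℂ) (l + ((j:ℕ):ℤ)) := by
  have hjlt := j.isLt
  rw [st14WinMat, st14_jacobi_mulVec, hA x (l + ((j:ℕ):ℤ))]
  have e1 : st14Ext (st14Win (x:ℤ→ℂ) l m) (((j:ℕ):ℤ) - 1)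
      = (x:ℤ→ℂ) (l + ((j:ℕ):ℤ) - 1) := by
    rw [st14Ext, dif_pos ⟨by omega, by omega⟩]
    show (x:ℤ→ℂ) (l + (((((j:ℕ):ℤ) - 1).toNat : ℕ) : ℤ)) = _
    have harg : l + (((((j:ℕ):ℤ) - 1).toNat : ℕ) : ℤ) = l + ((j:ℕ):ℤ) - 1 := by omega
    rw [harg]
  have e3 : st14Ext (st14Win (x:ℤ→ℂ) l m) (((j:ℕ):ℤ) + 1)
      = (x:ℤ→ℂ) (l + ((j:ℕ):ℤ) + 1) := by
    rw [st14Ext, dif_pos ⟨by omega, by omega⟩]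
    show (x:ℤ→ℂ) (l + (((((j:ℕ):ℤ) + 1).toNat : ℕ) : ℤ)) = _
    have harg : l + (((((j:ℕ):ℤ) + 1).toNat : ℕ) : ℤ) = l + ((j:ℕ):ℤ) + 1 := by omega
    rw [harg]
  rw [e1, e3, st14Ext_coe (st14Win (x:ℤ→ℂ) l m) j]
  rfl

lemma st14_main2 {u v w : ℤ → ℂ} {K : ℝ} (hK0 : 0 ≤ K)
    (hK : ∀ (l : ℤ) (m : ℕ), matOpNorm p (st14WinMat u v w l m) ≤ K)
    {A : SeqZ p →L[ℂ] SeqZ p} (hA : BiActs A u v w) : ‖A‖ ≤ K := by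
  refine ContinuousLinearMap.opNorm_le_bound A hK0 fun x => ?_
  have hσinj : ∀ (l : ℤ) (m : ℕ), Function.Injective (fun j : Fin m => l + ((j:ℕ):ℤ)) :=
    fun l m a b hab => Fin.ext (Int.natCast_inj.mp (add_left_cancel hab))
  have hwinle : ∀ (l : ℤ) (m : ℕ), pVecNorm p (st14Win (x : ℤ → ℂ) l m) ≤ ‖x‖ := by
    intro l m
    exact st14_restrict_le (fun j : Fin m => l + ((j:ℕ):ℤ)) (hσinj l m) x
  rcases eq_or_ne p ∞ with hp | hp
  · subst hp
    refine lp.norm_le_of_forall_le (mul_nonneg hK0 (norm_nonneg x)) fun i => ?_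
    have hrow := st14_window_row u v w x (i - 1) 3 (1 : Fin 3) (by norm_num) (by norm_num) hA
    have hi : i - 1 + (((1 : Fin 3):ℕ):ℤ) = i := by norm_num
    rw [hi] at hrow
    rw [← hrow]
    calc ‖(st14WinMat u v w (i-1) 3).mulVec (st14Win (x : ℤ → ℂ) (i-1) 3) (1 : Fin 3)‖
        ≤ pVecNorm ∞ ((st14WinMat u v w (i-1) 3).mulVec (st14Win (x : ℤ → ℂ) (i-1) 3)) :=
          st14_coord_le rfl _ _
      _ ≤ matOpNorm ∞ (st14WinMat u v w (i-1) 3) * pVecNorm ∞ (st14Win (x : ℤ → ℂ) (i-1) 3) :=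
          st14_le_matOpNorm _ _
      _ ≤ K * ‖x‖ :=
          mul_le_mul (hK (i-1) 3) (hwinle (i-1) 3) (st14_pVecNorm_nonneg _) hK0
  · have hq := st14_toReal_pos hp
    refine lp.norm_le_of_forall_sum_le hq (mul_nonneg hK0 (norm_nonneg x)) fun s => ?_
    rcases s.eq_empty_or_nonempty with rfl | hs
    · simpa using Real.rpow_nonneg (mul_nonneg hK0 (norm_nonneg x)) _
    obtain ⟨l, m, hwin⟩ : ∃ (l : ℤ) (m : ℕ), ∀ i ∈ s, 1 ≤ i - l ∧ i - l + 1 < m :=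
      ⟨s.min' hs - 1, (s.max' hs - s.min' hs + 3).toNat, fun i hi => by
        have h1 := s.min'_le i hi
        have h2 := s.le_max' i hi
        omega⟩
    have hm0 : 0 < m := by
      obtain ⟨i, hi⟩ := hs
      have := hwin i hi
      omega
    obtain ⟨ι, hι⟩ : ∃ ι : ℤ → Fin m, ∀ i ∈ s, ((ι i) : ℕ) = (i - l).toNat :=
      ⟨fun i => if h : 1 ≤ i - l ∧ i - l + 1 < m then ⟨(i - l).toNat, by omega⟩ else ⟨0, hm0⟩,
        fun i hi => by simp only [dif_pos (hwin i hi)]⟩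
    have hισ : ∀ i ∈ s, l + (((ι i) : ℕ) : ℤ) = i := by
      intro i hi
      have h := hwin i hi
      rw [hι i hi]
      omega
    have hrow : ∀ i ∈ s, (st14WinMat u v w l m).mulVec (st14Win (x : ℤ → ℂ) l m) (ι i)
        = (A x : ℤ → ℂ) i := by
      intro i hi
      have h := hwin i hi
      have h1 : 1 ≤ ((ι i) : ℕ) := by rw [hι i hi]; omega
      have h2 : ((ι i) : ℕ) + 1 < m := by rw [hι i hi]; omega
      have hr := st14_window_row u v w x l m (ι i) h1 h2 hA
      rw [hισ i hi] at hr
      exact hr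
    have hinj : ∀ a ∈ s, ∀ b ∈ s, ι a = ι b → a = b := by
      intro a ha b hb hab
      calc a = l + (((ι a) : ℕ) : ℤ) := (hισ a ha).symm
        _ = l + (((ι b) : ℕ) : ℤ) := by rw [hab]
        _ = b := hισ b hb
    calc ∑ i ∈ s, ‖(A x : ℤ→ℂ) i‖ ^ p.toReal
        = ∑ i ∈ s, ‖(st14WinMat u v w l m).mulVec (st14Win (x : ℤ → ℂ) l m) (ι i)‖ ^ p.toReal :=
          Finset.sum_congr rfl fun i hi => by rw [hrow i hi]
      _ = ∑ j ∈ s.image ι,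
            ‖(st14WinMat u v w l m).mulVec (st14Win (x : ℤ → ℂ) l m) j‖ ^ p.toReal :=
          (Finset.sum_image (f := fun j =>
            ‖(st14WinMat u v w l m).mulVec (st14Win (x : ℤ → ℂ) l m) j‖ ^ p.toReal) hinj).symm
      _ ≤ ∑ j : Fin m,
            ‖(st14WinMat u v w l m).mulVec (st14Win (x : ℤ → ℂ) l m) j‖ ^ p.toReal :=
          Finset.sum_le_sum_of_subset_of_nonneg (Finset.subset_univ _)
            (fun j _ _ => by positivity)
      _ = pVecNorm p ((st14WinMat u v w l m).mulVec (st14Win (x : ℤ → ℂ) l m)) ^ p.toReal :=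
          st14_sum_eq_pow hp _
      _ ≤ (K * ‖x‖) ^ p.toReal := by
          refine Real.rpow_le_rpow (st14_pVecNorm_nonneg _) ?_ hq.le
          calc pVecNorm p ((st14WinMat u v w l m).mulVec (st14Win (x : ℤ → ℂ) l m))
              ≤ matOpNorm p (st14WinMat u v w l m) * pVecNorm p (st14Win (x : ℤ → ℂ) l m) :=
                st14_le_matOpNorm _ _
            _ ≤ K * ‖x‖ :=
                mul_le_mul (hK l m) (hwinle l m) (st14_pVecNorm_nonneg _) hK0

end St14Aux5

section St14Aux6

open scoped ENNReal

variable {p : ℝ≥0∞} [Fact (1 ≤ p)]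

noncomputable def st14PadF {m n : ℕ} (hmn : m ≤ n) (uf : Fin m → ℂ) (u0 : ℂ) : Fin n → ℂ :=
  fun j => if h : (j:ℕ) < m then uf ⟨j, h⟩ else u0

lemma st14_pad {m n : ℕ} (hmn : m ≤ n) (uf vf wf : Fin m → ℂ) (u0 v0 w0 : ℂ) :
    matOpNorm p (JacobiMatrix uf vf wf) ≤
      matOpNorm p (JacobiMatrix (st14PadF hmn uf u0) (st14PadF hmn vf v0) (st14PadF hmn wf w0)) := by
  set J2 := JacobiMatrix (st14PadF hmn uf u0) (st14PadF hmn vf v0) (st14PadF hmn wf w0) with hJ2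
  refine st14_matOpNorm_le (st14_matOpNorm_nonneg _) fun x => ?_
  set x2 : Fin n → ℂ := fun j => if h : (j:ℕ) < m then x ⟨j, h⟩ else 0 with hx2
  set σ : Fin m → Fin n := fun j => ⟨(j:ℕ), lt_of_lt_of_le j.isLt hmn⟩ with hσ
  have hσinj : Function.Injective σ := by
    intro a b hab
    have : ((σ a) : ℕ) = ((σ b) : ℕ) := congrArg _ hab
    exact Fin.ext this
  have hσcomp : ∀ i : Fin m, x2 (σ i) = x i := by
    intro i
    rw [hx2]
    simp only [hσ, dif_pos i.isLt]
  have hext : ∀ t : ℤ, st14Ext x2 t = st14Ext x t := by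
    intro t
    by_cases h1 : 0 ≤ t ∧ t < m
    · rw [st14Ext, st14Ext, dif_pos ⟨h1.1, by omega⟩, dif_pos h1]
      show (if h : ((⟨t.toNat, by omega⟩ : Fin n):ℕ) < m then x ⟨_, h⟩ else 0) = _
      rw [dif_pos (by show t.toNat < m; omega)]
    · by_cases h2 : 0 ≤ t ∧ t < n
      · rw [st14Ext, st14Ext, dif_pos h2, dif_neg h1]
        show (if h : ((⟨t.toNat, by omega⟩ : Fin n):ℕ) < m then x ⟨_, h⟩ else 0) = 0
        rw [dif_neg (by show ¬ t.toNat < m; omega)]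
      · rw [st14Ext_zero (by omega), st14Ext_zero h1]
  have hrow : ∀ i : Fin m, J2.mulVec x2 (σ i) = (JacobiMatrix uf vf wf).mulVec x i := by
    intro i
    rw [hJ2, st14_jacobi_mulVec, st14_jacobi_mulVec]
    have hv : ((σ i : Fin n):ℕ) = (i:ℕ) := rfl
    rw [hv, hext, hext, hext]
    have hu' : st14PadF hmn uf u0 (σ i) = uf i := by
      rw [st14PadF]
      simp only [hv, dif_pos i.isLt]
    have hv' : st14PadF hmn vf v0 (σ i) = vf i := by
      rw [st14PadF]
      simp only [hv, dif_pos i.isLt]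
    have hw' : st14PadF hmn wf w0 (σ i) = wf i := by
      rw [st14PadF]
      simp only [hv, dif_pos i.isLt]
    rw [hu', hv', hw']
  have hx2norm : pVecNorm p x2 ≤ pVecNorm p x := by
    have h1 : pVecNorm p x2 ≤ pVecNorm p (fun i => x2 (σ i)) := by
      refine st14_pad_le_fin σ hσinj x2 fun j hj => ?_
      rw [hx2]
      refine dif_neg fun hc => ?_
      exact hj ⟨(j:ℕ), hc⟩ (Fin.ext rfl)
    have h2 : (fun i => x2 (σ i)) = x := funext hσcomp
    rwa [h2] at h1
  calc pVecNorm p ((JacobiMatrix uf vf wf).mulVec x)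
      = pVecNorm p (fun i => J2.mulVec x2 (σ i)) := by
        congr 1
        funext i
        rw [hrow]
    _ ≤ pVecNorm p (J2.mulVec x2) := st14_restrict_le_fin σ hσinj _
    _ ≤ matOpNorm p J2 * pVecNorm p x2 := st14_le_matOpNorm _ _
    _ ≤ matOpNorm p J2 * pVecNorm p x :=
        mul_le_mul_of_nonneg_left hx2norm (st14_matOpNorm_nonneg _)

end St14Aux6

section St14Aux7

open scoped ENNReal

noncomputable def st14ExtD {n : ℕ} (uf : Fin n → ℂ) (u0 : ℂ) : ℤ → ℂ :=
  fun k => if h : 0 ≤ k ∧ k < n then uf ⟨k.toNat, by omega⟩ else u0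

lemma st14ExtD_coe {n : ℕ} (uf : Fin n → ℂ) (u0 : ℂ) (j : Fin n) :
    st14ExtD uf u0 ((j:ℕ):ℤ) = uf j := by
  have h : (0:ℤ) ≤ ((j:ℕ):ℤ) ∧ ((j:ℕ):ℤ) < n := ⟨Int.natCast_nonneg _, by exact_mod_cast j.isLt⟩
  rw [st14ExtD, dif_pos h]
  congr 1

lemma st14ExtD_mem {n : ℕ} {uf : Fin n → ℂ} {u0 : ℂ} {U : Set ℂ}
    (huf : ∀ j, uf j ∈ U) (hu0 : u0 ∈ U) : ∀ k, st14ExtD uf u0 k ∈ U := by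
  intro k
  rw [st14ExtD]
  split_ifs with h
  · exact huf _
  · exact hu0

end St14Aux7

/-- `M_{fin,p} = lim_{n→∞} M_{n,p} = M_p`. -/
theorem statement14 (U V W : Set ℂ)
    (hUne : U.Nonempty) (hUc : IsCompact U) (hVne : V.Nonempty) (hVc : IsCompact V)
    (hWne : W.Nonempty) (hWc : IsCompact W)
    (p : ℝ≥0∞) [Fact (1 ≤ p)] :
    MnormFin U V W p = Mnorm U V W p ∧
    Filter.Tendsto (fun n => MnormFinN U V W p n) Filter.atTop (nhds (Mnorm U V W p)) := by
  obtain ⟨u0, hu0⟩ := hUne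
  obtain ⟨v0, hv0⟩ := hVne
  obtain ⟨w0, hw0⟩ := hWne
  obtain ⟨Cu, hCu⟩ := hUc.isBounded.exists_norm_le
  obtain ⟨Cv, hCv⟩ := hVc.isBounded.exists_norm_le
  obtain ⟨Cw, hCw⟩ := hWc.isBounded.exists_norm_le
  -- bound on all bi-infinite operators
  have hbound : ∀ (B : SeqZ p →L[ℂ] SeqZ p), MemM U V W B → ‖B‖ ≤ Cu + Cv + Cw := by
    rintro B ⟨u, v, w, ⟨hu, hv, hw⟩, hB⟩
    exact st14_biActs_norm_le hB (fun i => hCu _ (hu i)) (fun i => hCv _ (hv i))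
      (fun i => hCw _ (hw i))
  set SM := {x : ℝ | ∃ B : SeqZ p →L[ℂ] SeqZ p, MemM U V W B ∧ x = ‖B‖} with hSM
  set SFin := {x : ℝ | ∃ (n : ℕ) (u v w : Fin n → ℂ), RangesIn U V W u v w ∧
    x = matOpNorm p (JacobiMatrix u v w)} with hSFin
  set SN := fun n : ℕ => {x : ℝ | ∃ u v w : Fin n → ℂ, RangesIn U V W u v w ∧
    x = matOpNorm p (JacobiMatrix u v w)} with hSN
  have hMnorm : Mnorm U V W p = sSup SM := rfl
  have hMFin : MnormFin U V W p = sSup SFin := rfl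
  have hMFinN : ∀ n, MnormFinN U V W p n = sSup (SN n) := fun n => rfl
  -- the constant operator
  have hB0mem : MemM (p := p) U V W (st14BiOp (fun _ => u0) (fun _ => v0) (fun _ => w0)
      (fun i => hCu _ hu0) (fun i => hCv _ hv0) (fun i => hCw _ hw0)) :=
    ⟨fun _ => u0, fun _ => v0, fun _ => w0, ⟨fun _ => hu0, fun _ => hv0, fun _ => hw0⟩,
      st14BiOp_biActs _ _ _⟩
  have hSMne : SM.Nonempty := ⟨_, _, hB0mem, rfl⟩
  have hSMbdd : BddAbove SM := ⟨Cu + Cv + Cw, by rintro x ⟨B, hB, rfl⟩; exact hbound B hB⟩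
  -- every finite matrix norm is at most Mnorm
  have hfin_le : ∀ (n : ℕ) (uf vf wf : Fin n → ℂ), RangesIn U V W uf vf wf →
      matOpNorm p (JacobiMatrix uf vf wf) ≤ Mnorm U V W p := by
    rintro n uf vf wf ⟨h1, h2, h3⟩
    have hu' : ∀ i, ‖st14ExtD uf u0 i‖ ≤ Cu := fun i => hCu _ (st14ExtD_mem h1 hu0 i)
    have hv' : ∀ i, ‖st14ExtD vf v0 i‖ ≤ Cv := fun i => hCv _ (st14ExtD_mem h2 hv0 i)
    have hw' : ∀ i, ‖st14ExtD wf w0 i‖ ≤ Cw := fun i => hCw _ (st14ExtD_mem h3 hw0 i)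
    have hmemB : MemM (p := p) U V W (st14BiOp _ _ _ hu' hv' hw') :=
      ⟨_, _, _, ⟨st14ExtD_mem h1 hu0, st14ExtD_mem h2 hv0, st14ExtD_mem h3 hw0⟩,
        st14BiOp_biActs _ _ _⟩
    calc matOpNorm p (JacobiMatrix uf vf wf)
        ≤ ‖st14BiOp (p := p) _ _ _ hu' hv' hw'‖ :=
          st14_main1 uf vf wf _ _ _
            (fun j => ⟨st14ExtD_coe uf u0 j, st14ExtD_coe vf v0 j, st14ExtD_coe wf w0 j⟩)
            (st14BiOp_biActs _ _ _)
      _ ≤ Mnorm U V W p := by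
          rw [hMnorm]
          exact le_csSup hSMbdd ⟨_, hmemB, rfl⟩
  have hSFinne : SFin.Nonempty :=
    ⟨_, 1, fun _ => u0, fun _ => v0, fun _ => w0,
      ⟨fun _ => hu0, fun _ => hv0, fun _ => hw0⟩, rfl⟩
  have hSFinbdd : BddAbove SFin := by
    refine ⟨Mnorm U V W p, ?_⟩
    rintro x ⟨n, uf, vf, wf, hr, rfl⟩
    exact hfin_le n uf vf wf hr
  have h1 : MnormFin U V W p ≤ Mnorm U V W p := by
    rw [hMFin]
    refine csSup_le hSFinne ?_
    rintro x ⟨n, uf, vf, wf, hr, rfl⟩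
    exact hfin_le n uf vf wf hr
  have hMFin0 : 0 ≤ MnormFin U V W p := by
    rw [hMFin]
    refine le_trans (st14_matOpNorm_nonneg (p := p)
      (JacobiMatrix (fun _ : Fin 1 => u0) (fun _ => v0) (fun _ => w0))) (le_csSup hSFinbdd ?_)
    exact ⟨1, fun _ => u0, fun _ => v0, fun _ => w0,
      ⟨fun _ => hu0, fun _ => hv0, fun _ => hw0⟩, rfl⟩
  have hwinK : ∀ u v w : ℤ → ℂ, RangesIn U V W u v w →
      ∀ (l : ℤ) (m : ℕ), matOpNorm p (st14WinMat u v w l m) ≤ MnormFin U V W p := by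
    rintro u v w ⟨hu, hv, hw⟩ l m
    rw [hMFin]
    refine le_csSup hSFinbdd ?_
    exact ⟨m, st14Win u l m, st14Win v l m, st14Win w l m,
      ⟨fun j => hu _, fun j => hv _, fun j => hw _⟩, rfl⟩
  have h2 : Mnorm U V W p ≤ MnormFin U V W p := by
    rw [hMnorm]
    refine csSup_le hSMne ?_
    rintro x ⟨B, ⟨u, v, w, hr, hB⟩, rfl⟩
    exact st14_main2 hMFin0 (hwinK u v w hr) hB
  have heq : MnormFin U V W p = Mnorm U V W p := le_antisymm h1 h2
  refine ⟨heq, ?_⟩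
  -- part 2
  have hSNne : ∀ n, (SN n).Nonempty := fun n =>
    ⟨_, fun _ => u0, fun _ => v0, fun _ => w0,
      ⟨fun _ => hu0, fun _ => hv0, fun _ => hw0⟩, rfl⟩
  have hSNsub : ∀ n, SN n ⊆ SFin := by
    intro n
    rintro x ⟨uf, vf, wf, hr, rfl⟩
    exact ⟨n, uf, vf, wf, hr, rfl⟩
  have hSNbdd : ∀ n, BddAbove (SN n) := fun n => hSFinbdd.mono (hSNsub n)
  have hMn_le : ∀ n, MnormFinN U V W p n ≤ MnormFin U V W p := by
    intro n
    rw [hMFinN, hMFin]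
    exact csSup_le_csSup hSFinbdd (hSNne n) (hSNsub n)
  have hmono : Monotone (fun n => MnormFinN U V W p n) := by
    intro m n hmn
    show MnormFinN U V W p m ≤ MnormFinN U V W p n
    rw [hMFinN, hMFinN]
    refine csSup_le (hSNne m) ?_
    rintro x ⟨uf, vf, wf, ⟨hr1, hr2, hr3⟩, rfl⟩
    have hpadmem : ∀ j : Fin n, st14PadF hmn uf u0 j ∈ U := by
      intro j
      rw [st14PadF]
      split_ifs with h
      · exact hr1 _
      · exact hu0
    have hpadmemv : ∀ j : Fin n, st14PadF hmn vf v0 j ∈ V := by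
      intro j
      rw [st14PadF]
      split_ifs with h
      · exact hr2 _
      · exact hv0
    have hpadmemw : ∀ j : Fin n, st14PadF hmn wf w0 j ∈ W := by
      intro j
      rw [st14PadF]
      split_ifs with h
      · exact hr3 _
      · exact hw0
    calc matOpNorm p (JacobiMatrix uf vf wf)
        ≤ matOpNorm p (JacobiMatrix (st14PadF hmn uf u0) (st14PadF hmn vf v0)
            (st14PadF hmn wf w0)) := st14_pad hmn uf vf wf u0 v0 w0
      _ ≤ sSup (SN n) := le_csSup (hSNbdd n)
          ⟨st14PadF hmn uf u0, st14PadF hmn vf v0, st14PadF hmn wf w0,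
            ⟨hpadmem, hpadmemv, hpadmemw⟩, rfl⟩
  have hrangebdd : BddAbove (Set.range fun n => MnormFinN U V W p n) := by
    refine ⟨MnormFin U V W p, ?_⟩
    rintro x ⟨n, rfl⟩
    exact hMn_le n
  have hsup : (⨆ n, MnormFinN U V W p n) = MnormFin U V W p := by
    refine le_antisymm (ciSup_le hMn_le) ?_
    rw [hMFin]
    refine csSup_le hSFinne ?_
    rintro x ⟨n, uf, vf, wf, hr, rfl⟩
    calc matOpNorm p (JacobiMatrix uf vf wf)
        ≤ MnormFinN U V W p n := by
          rw [hMFinN]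
          exact le_csSup (hSNbdd n) ⟨uf, vf, wf, hr, rfl⟩
      _ ≤ ⨆ n, MnormFinN U V W p n := le_ciSup hrangebdd n
  have htend := tendsto_atTop_ciSup hmono hrangebdd
  rw [hsup, heq] at htend
  exact htend
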